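/- Let Γ = {Λ₁,…,Λ_s} be a collection of non-empty subsets of {1,…,r} with connected components C₁,…,C_p, let w ∈ ℂ^r have all entries non-zero, and V_Λ = {v ∈ w^⊥ : v_j = 0 for j ∉ Λ}. Then dim(V_{Λ₁} + ⋯ + V_{Λ_s}) = |Λ₁ ∪ ⋯ ∪ Λ_s| − p. -/

import Mathlib

open Finset
open scoped Classical

set_option synthInstance.maxHeartbeats 1000000
set_option maxHeartbeats 1000000

/-- For `w ∈ ℂⁿ` and `Λ ⊆ {1,…,n}`, the space `V_Λ = {v ∈ w^⊥ : v_j = 0 ∀ j ∉ Λ}`,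
where `w^⊥ = {v : Σⱼ vⱼ wⱼ = 0}`. -/
noncomputable def Vsub {n : ℕ} (w : Fin n → ℂ) (Λ : Finset (Fin n)) :
    Submodule ℂ (Fin n → ℂ) :=
  (LinearMap.ker (∑ j, w j • (LinearMap.proj j : (Fin n → ℂ) →ₗ[ℂ] ℂ))) ⊓
    ⨅ j ∈ {j | j ∉ Λ}, LinearMap.ker (LinearMap.proj j : (Fin n → ℂ) →ₗ[ℂ] ℂ)

/-- `C` is a connected component of the collection `Λ₁,…,Λ_s`: it is the union of
the `Λ i` for `i` ranging over a connected component of the graph on indices which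
joins `i, j` whenever `Λ i ∩ Λ j ≠ ∅`. -/
def IsConnComp {X : Type*} [DecidableEq X] {s : ℕ} (Λ : Fin s → Finset X)
    (C : Finset X) : Prop :=
  ∃ i : Fin s, C =
    (Finset.univ.filter fun j =>
      Relation.ReflTransGen (fun i' j' => (Λ i' ∩ Λ j').Nonempty) i j).biUnion Λ

lemma mem_Vsub_iff {n : ℕ} {w : Fin n → ℂ} {Λ : Finset (Fin n)} {v : Fin n → ℂ} :
    v ∈ Vsub w Λ ↔ (∑ j, w j * v j = 0) ∧ ∀ j ∉ Λ, v j = 0 := by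
  simp [Vsub, Submodule.mem_inf, Submodule.mem_iInf, LinearMap.mem_ker,
    LinearMap.sum_apply, LinearMap.smul_apply, smul_eq_mul]

noncomputable def fw {n : ℕ} (w : Fin n → ℂ) : (Fin n → ℂ) →ₗ[ℂ] ℂ :=
  ∑ j, w j • (LinearMap.proj j : (Fin n → ℂ) →ₗ[ℂ] ℂ)

lemma fw_apply {n : ℕ} (w v : Fin n → ℂ) : fw w v = ∑ j, w j * v j := by
  simp [fw, LinearMap.sum_apply, smul_eq_mul]

noncomputable def coordSpace {n : ℕ} (Λ : Finset (Fin n)) : Submodule ℂ (Fin n → ℂ) where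
  carrier := {v | ∀ j ∉ Λ, v j = 0}
  add_mem' := fun ha hb j hj => by simp [ha j hj, hb j hj]
  zero_mem' := fun j _ => rfl
  smul_mem' := fun c v hv j hj => by simp [hv j hj]

lemma mem_coordSpace {n : ℕ} {Λ : Finset (Fin n)} {v : Fin n → ℂ} :
    v ∈ coordSpace Λ ↔ ∀ j ∉ Λ, v j = 0 := Iff.rfl

lemma Vsub_eq {n : ℕ} (w : Fin n → ℂ) (Λ : Finset (Fin n)) :
    Vsub w Λ = LinearMap.ker (fw w) ⊓ coordSpace Λ := by
  ext v
  simp [mem_Vsub_iff, Submodule.mem_inf, LinearMap.mem_ker, fw_apply, mem_coordSpace]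

noncomputable def coordEquiv {n : ℕ} (Λ : Finset (Fin n)) :
    coordSpace Λ ≃ₗ[ℂ] (Λ → ℂ) where
  toFun v := fun j => v.1 j
  invFun u := ⟨fun j => if h : j ∈ Λ then u ⟨j, h⟩ else 0, fun j hj => dif_neg hj⟩
  left_inv := by
    rintro ⟨v, hv⟩
    ext j
    by_cases h : j ∈ Λ
    · simp [h]
    · simp [h, hv j h]
  right_inv := by
    intro u; ext j; simp
  map_add' := fun a b => rfl
  map_smul' := fun c a => rfl

lemma finrank_coordSpace {n : ℕ} (Λ : Finset (Fin n)) :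
    Module.finrank ℂ (coordSpace Λ) = Λ.card := by
  rw [(coordEquiv Λ).finrank_eq]
  simp [Module.finrank_pi]

lemma finrank_Vsub {n : ℕ} {w : Fin n → ℂ} (hw : ∀ j, w j ≠ 0) {Λ : Finset (Fin n)}
    (hΛ : Λ.Nonempty) : Module.finrank ℂ (Vsub w Λ) = Λ.card - 1 := by
  obtain ⟨j0, hj0⟩ := hΛ
  set W := coordSpace (n := n) Λ with hW
  have hrange : LinearMap.range ((fw w).domRestrict W) = ⊤ := by
    rw [LinearMap.range_eq_top]
    intro c
    have hx : (Pi.single j0 (1:ℂ) : Fin n → ℂ) ∈ W := by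
      intro j hj
      exact Pi.single_eq_of_ne (by rintro rfl; exact hj hj0) 1
    refine ⟨(c / w j0) • ⟨_, hx⟩, ?_⟩
    have : fw w (Pi.single j0 (1:ℂ)) = w j0 := by
      rw [fw_apply]
      rw [Finset.sum_eq_single j0]
      · simp
      · intro b _ hb; simp [Pi.single_eq_of_ne hb]
      · simp
    simp only [LinearMap.domRestrict_apply, SetLike.val_smul, map_smul, smul_eq_mul]
    rw [this]
    exact div_mul_cancel₀ c (hw j0)
  have hker : LinearMap.ker ((fw w).domRestrict W) = (Vsub w Λ).comap W.subtype := by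
    rw [LinearMap.ker_domRestrict, Vsub_eq, Submodule.comap_inf]
    have : W.comap W.subtype = ⊤ := by
      ext x; simp
    simp [this]
    exact inf_le_left
  have hle : Vsub w Λ ≤ W := by rw [Vsub_eq]; exact inf_le_right
  have e := Submodule.comapSubtypeEquivOfLe hle
  have h1 := LinearMap.finrank_range_add_finrank_ker ((fw w).domRestrict W)
  have h3 : Module.finrank ℂ ((Vsub w Λ).comap W.subtype) = Module.finrank ℂ (Vsub w Λ) :=
    e.finrank_eq
  rw [hrange, hker, finrank_top, h3] at h1
  have hcard : 0 < Λ.card := Finset.card_pos.mpr ⟨j0, hj0⟩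
  have : Module.finrank ℂ ℂ = 1 := Module.finrank_self ℂ
  rw [this] at h1
  have h2 : Module.finrank ℂ W = Λ.card := finrank_coordSpace Λ
  omega

lemma Vsub_mono {n : ℕ} {w : Fin n → ℂ} {A B : Finset (Fin n)} (h : A ⊆ B) :
    Vsub w A ≤ Vsub w B := by
  intro v hv
  rw [mem_Vsub_iff] at hv ⊢
  exact ⟨hv.1, fun j hj => hv.2 j (fun hja => hj (h hja))⟩

lemma Vsub_union {n : ℕ} {w : Fin n → ℂ} (hw : ∀ j, w j ≠ 0) {A B : Finset (Fin n)}
    (h : (A ∩ B).Nonempty) :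
    Vsub w (A ∪ B) = Vsub w A ⊔ Vsub w B := by
  refine le_antisymm ?_ (sup_le (Vsub_mono Finset.subset_union_left)
    (Vsub_mono Finset.subset_union_right))
  obtain ⟨j0, hj0⟩ := h
  rw [Finset.mem_inter] at hj0
  intro v hv
  rw [mem_Vsub_iff] at hv
  set c : ℂ := -(∑ j ∈ A \ B, w j * v j) / w j0 with hc
  set v1 : Fin n → ℂ := fun j => if j ∈ A \ B then v j else if j = j0 then c else 0 with hv1
  have hj0AB : j0 ∉ A \ B := by simp [hj0.2]
  have hsum1 : ∑ j, w j * v1 j = 0 := by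
    have hsub : insert j0 (A \ B) ⊆ Finset.univ := Finset.subset_univ _
    rw [← Finset.sum_subset hsub]
    · rw [Finset.sum_insert hj0AB]
      have h1 : w j0 * v1 j0 = -(∑ j ∈ A \ B, w j * v j) := by
        have hv1j0 : v1 j0 = c := by
          simp only [hv1]; rw [if_neg hj0AB]; simp
        rw [hv1j0, hc, mul_comm, neg_div, neg_mul, div_mul_cancel₀ _ (hw j0)]
      have h2 : ∀ j ∈ A \ B, w j * v1 j = w j * v j := by
        intro j hj; simp only [hv1]; rw [if_pos hj]
      rw [h1, Finset.sum_congr rfl h2]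
      ring
    · intro j _ hj
      rw [Finset.mem_insert, not_or] at hj
      simp only [hv1]
      rw [if_neg hj.2, if_neg hj.1, mul_zero]
  have hm1 : v1 ∈ Vsub w A := by
    rw [mem_Vsub_iff]
    refine ⟨hsum1, fun j hj => ?_⟩
    have hAB : j ∉ A \ B := fun h' => hj (Finset.mem_sdiff.mp h').1
    have hne : j ≠ j0 := by rintro rfl; exact hj hj0.1
    simp only [hv1]
    rw [if_neg hAB, if_neg hne]
  have hm2 : v - v1 ∈ Vsub w B := by
    rw [mem_Vsub_iff]
    constructor
    · have : ∑ j, w j * (v - v1) j = ∑ j, w j * v j - ∑ j, w j * v1 j := by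
        rw [← Finset.sum_sub_distrib]; congr 1; ext j; simp [Pi.sub_apply]; ring
      rw [this, hv.1, hsum1, sub_zero]
    · intro j hj
      by_cases hA : j ∈ A
      · have hAB : j ∈ A \ B := Finset.mem_sdiff.mpr ⟨hA, hj⟩
        simp only [Pi.sub_apply, hv1]
        rw [if_pos hAB, sub_self]
      · have hne : j ≠ j0 := by rintro rfl; exact hj hj0.2
        have hAB : j ∉ A \ B := fun h' => hA (Finset.mem_sdiff.mp h').1
        have hvj : v j = 0 := hv.2 j (by simp [hA, hj])
        simp only [Pi.sub_apply, hv1]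
        rw [if_neg hAB, if_neg hne, hvj, sub_zero]
  have hvsplit : v = v1 + (v - v1) := by ring
  rw [hvsplit]
  exact Submodule.add_mem_sup hm1 hm2

lemma crossing {α : Type*} {rel : α → α → Prop} {T : Finset α} {i j : α}
    (h : Relation.ReflTransGen rel i j) (hi : i ∈ T) :
    j ∉ T → ∃ a b, a ∈ T ∧ b ∉ T ∧ rel a b ∧ Relation.ReflTransGen rel i b := by
  induction h with
  | refl => intro hj; exact absurd hi hj
  | @tail c d hic hcd ih =>
    intro hd
    by_cases hc : c ∈ T
    · exact ⟨c, d, hc, hd, hcd, hic.tail hcd⟩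
    · exact ih hc

lemma biUnion_le_sup {n : ℕ} {w : Fin n → ℂ} (hw : ∀ j, w j ≠ 0) {s : ℕ}
    (Λ : Fin s → Finset (Fin n)) (hΛ : ∀ i, (Λ i).Nonempty) (i : Fin s) :
    Vsub w ((Finset.univ.filter fun j =>
        Relation.ReflTransGen (fun i' j' => (Λ i' ∩ Λ j').Nonempty) i j).biUnion Λ)
      ≤ ⨆ j, Vsub w (Λ j) := by
  set rel : Fin s → Fin s → Prop := fun i' j' => (Λ i' ∩ Λ j').Nonempty with hrel
  set S := Finset.univ.filter fun j => Relation.ReflTransGen rel i j with hS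
  have key : ∀ m : ℕ, ∀ T : Finset (Fin s), T ⊆ S → i ∈ T →
      Vsub w (T.biUnion Λ) ≤ (⨆ j, Vsub w (Λ j)) → S.card - T.card ≤ m →
      Vsub w (S.biUnion Λ) ≤ ⨆ j, Vsub w (Λ j) := by
    intro m
    induction m with
    | zero =>
      intro T hTS hiT hV hcard
      have hle : T.card ≤ S.card := Finset.card_le_card hTS
      have : T = S := Finset.eq_of_subset_of_card_le hTS (by omega)
      rwa [this] at hV
    | succ m ih =>
      intro T hTS hiT hV hcard
      by_cases hST : S ⊆ T
      · have : T = S := Finset.Subset.antisymm hTS hST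
        rwa [this] at hV
      · obtain ⟨j, hjS, hjT⟩ := Finset.not_subset.mp hST
        have hreach : Relation.ReflTransGen rel i j := (Finset.mem_filter.mp hjS).2
        obtain ⟨a, b, haT, hbT, hab, hib⟩ := crossing hreach hiT hjT
        have hbS : b ∈ S := Finset.mem_filter.mpr ⟨Finset.mem_univ _, hib⟩
        have hTS2 : insert b T ⊆ S := Finset.insert_subset hbS hTS
        have hint : (Λ b ∩ T.biUnion Λ).Nonempty := by
          obtain ⟨x, hx⟩ := hab
          rw [Finset.mem_inter] at hx
          exact ⟨x, Finset.mem_inter.mpr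
            ⟨hx.2, Finset.mem_biUnion.mpr ⟨a, haT, hx.1⟩⟩⟩
        have hV' : Vsub w ((insert b T).biUnion Λ) ≤ ⨆ j, Vsub w (Λ j) := by
          rw [Finset.biUnion_insert, Vsub_union hw hint]
          exact sup_le (le_iSup (fun j => Vsub w (Λ j)) b) hV
        have hcard' : S.card - (insert b T).card ≤ m := by
          rw [Finset.card_insert_of_notMem hbT]
          omega
        exact ih (insert b T) hTS2 (Finset.mem_insert_of_mem hiT) hV' hcard'
  have hiS : i ∈ S := Finset.mem_filter.mpr ⟨Finset.mem_univ _, Relation.ReflTransGen.refl⟩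
  refine key S.card {i} (Finset.singleton_subset_iff.mpr hiS) (Finset.mem_singleton_self i)
    ?_ (by omega)
  rw [Finset.singleton_biUnion]
  exact le_iSup (fun j => Vsub w (Λ j)) i

/-- If the collection `{Λ₁,…,Λ_s}` of non-empty subsets of `{1,…,r}` has connected
components `C₁,…,C_p`, then `dim(V_{Λ₁} + ⋯ + V_{Λ_s}) = |Λ₁ ∪ ⋯ ∪ Λ_s| − p`. -/
theorem stmt5 {r : ℕ} (w : Fin r → ℂ) (hw : ∀ j, w j ≠ 0)
    {s p : ℕ} (Λ : Fin s → Finset (Fin r)) (hΛ : ∀ i, (Λ i).Nonempty)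
    (C : Fin p → Finset (Fin r)) (hCinj : Function.Injective C)
    (hCC : ∀ k, IsConnComp Λ (C k))
    (hall : ∀ D : Finset (Fin r), IsConnComp Λ D → ∃ k, C k = D) :
    Module.finrank ℂ (⨆ i, Vsub w (Λ i) : Submodule ℂ (Fin r → ℂ)) =
      (Finset.univ.biUnion Λ).card - p := by
  classical
  set rel : Fin s → Fin s → Prop := fun i' j' => (Λ i' ∩ Λ j').Nonempty with hrel
  have hrelsymm : Symmetric rel := by
    intro a b h
    simp only [hrel] at h ⊢
    rwa [Finset.inter_comm]
  have hsymm : Symmetric (Relation.ReflTransGen rel) :=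
    by haveI : Std.Symm rel := ⟨fun a b h => hrelsymm h⟩; exact fun a b h => Std.Symm.symm _ _ h
  set D : Fin s → Finset (Fin r) := fun i =>
    (Finset.univ.filter fun j => Relation.ReflTransGen rel i j).biUnion Λ with hDdef
  have hD : ∀ i, IsConnComp Λ (D i) := fun i => ⟨i, rfl⟩
  have hΛD : ∀ i, Λ i ⊆ D i := fun i =>
    Finset.subset_biUnion_of_mem Λ
      (Finset.mem_filter.mpr ⟨Finset.mem_univ _, Relation.ReflTransGen.refl⟩)
  -- the two sups agree
  have hsup : (⨆ i, Vsub w (Λ i) : Submodule ℂ (Fin r → ℂ)) = ⨆ k, Vsub w (C k) := by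
    apply le_antisymm
    · apply iSup_le; intro i
      obtain ⟨k, hk⟩ := hall (D i) (hD i)
      exact le_trans (Vsub_mono (hk ▸ hΛD i)) (le_iSup (fun k => Vsub w (C k)) k)
    · apply iSup_le; intro k
      obtain ⟨i, hi⟩ := hCC k
      rw [hi]
      exact biUnion_le_sup hw Λ hΛ i
  -- each component is nonempty
  have hCne : ∀ k, (C k).Nonempty := by
    intro k; obtain ⟨i, hi⟩ := hCC k
    obtain ⟨x, hx⟩ := hΛ i
    refine ⟨x, ?_⟩
    rw [hi]
    exact Finset.mem_biUnion.mpr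
      ⟨i, Finset.mem_filter.mpr ⟨Finset.mem_univ _, Relation.ReflTransGen.refl⟩, hx⟩
  -- components are pairwise disjoint
  have hCdisj : ∀ k l, k ≠ l → Disjoint (C k) (C l) := by
    intro k l hkl
    rw [Finset.disjoint_left]
    intro x hxk hxl
    obtain ⟨ik, hik⟩ := hCC k
    obtain ⟨il, hil⟩ := hCC l
    rw [hik] at hxk; rw [hil] at hxl
    obtain ⟨jk, hjk, hxjk⟩ := Finset.mem_biUnion.mp hxk
    obtain ⟨jl, hjl, hxjl⟩ := Finset.mem_biUnion.mp hxl
    have h1 : Relation.ReflTransGen rel ik jk := (Finset.mem_filter.mp hjk).2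
    have h2 : Relation.ReflTransGen rel il jl := (Finset.mem_filter.mp hjl).2
    have h3 : rel jk jl := ⟨x, Finset.mem_inter.mpr ⟨hxjk, hxjl⟩⟩
    have hklreach : Relation.ReflTransGen rel ik il := (h1.tail h3).trans (hsymm h2)
    have hCeq : C k = C l := by
      rw [hik, hil]
      congr 1
      ext j
      simp only [Finset.mem_filter, Finset.mem_univ, true_and]
      constructor
      · intro h; exact (hsymm hklreach).trans h
      · intro h; exact hklreach.trans h
    exact hkl (hCinj hCeq)
  -- components cover the union
  have hcover : Finset.univ.biUnion C = Finset.univ.biUnion Λ := by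
    apply Finset.Subset.antisymm
    · intro x hx
      obtain ⟨k, _, hxk⟩ := Finset.mem_biUnion.mp hx
      obtain ⟨i, hi⟩ := hCC k
      rw [hi] at hxk
      obtain ⟨j, _, hxj⟩ := Finset.mem_biUnion.mp hxk
      exact Finset.mem_biUnion.mpr ⟨j, Finset.mem_univ j, hxj⟩
    · intro x hx
      obtain ⟨i, _, hxi⟩ := Finset.mem_biUnion.mp hx
      obtain ⟨k, hk⟩ := hall (D i) (hD i)
      exact Finset.mem_biUnion.mpr ⟨k, Finset.mem_univ k, hk ▸ hΛD i hxi⟩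
  -- dimension count over components
  have hsumrank : ∀ T : Finset (Fin p),
      Module.finrank ℂ (⨆ k ∈ T, Vsub w (C k) : Submodule ℂ (Fin r → ℂ)) =
        ∑ k ∈ T, ((C k).card - 1) := by
    intro T
    induction T using Finset.induction_on with
    | empty => simp
    | @insert a T ha ih =>
      have hdis : Disjoint (Vsub w (C a)) (⨆ k ∈ T, Vsub w (C k) : Submodule ℂ (Fin r → ℂ)) := by
        rw [Submodule.disjoint_def]
        intro v hva hvT
        have h1 : ∀ j ∉ C a, v j = 0 := (mem_Vsub_iff.mp hva).2
        have h2 : ∀ j ∉ T.biUnion C, v j = 0 := by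
          have hle : (⨆ k ∈ T, Vsub w (C k) : Submodule ℂ (Fin r → ℂ)) ≤
              coordSpace (T.biUnion C) := by
            apply iSup_le; intro k; apply iSup_le; intro hk
            intro u hu j hj
            exact (mem_Vsub_iff.mp hu).2 j
              (fun hjc => hj (Finset.mem_biUnion.mpr ⟨k, hk, hjc⟩))
          exact hle hvT
        funext j
        by_cases hja : j ∈ C a
        · refine h2 j ?_
          intro hj
          obtain ⟨k, hkT, hjk⟩ := Finset.mem_biUnion.mp hj
          have hak : a ≠ k := fun h => ha (h ▸ hkT)
          exact Finset.disjoint_left.mp (hCdisj a k hak) hja hjk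
        · exact h1 j hja
      rw [Finset.iSup_insert]
      have hfin := Submodule.finrank_sup_add_finrank_inf_eq (Vsub w (C a))
        (⨆ k ∈ T, Vsub w (C k) : Submodule ℂ (Fin r → ℂ))
      rw [hdis.eq_bot, finrank_bot, add_zero] at hfin
      rw [hfin, finrank_Vsub hw (hCne a), ih, Finset.sum_insert ha]
  have huniv : (⨆ k, Vsub w (C k) : Submodule ℂ (Fin r → ℂ)) =
      ⨆ k ∈ (Finset.univ : Finset (Fin p)), Vsub w (C k) := by
    simp
  -- sum arithmetic
  have harith : ∑ k ∈ (Finset.univ : Finset (Fin p)), ((C k).card - 1 + 1) =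
      ∑ k ∈ Finset.univ, (C k).card :=
    Finset.sum_congr rfl (fun k _ => Nat.sub_add_cancel (hCne k).card_pos)
  rw [Finset.sum_add_distrib] at harith
  simp only [Finset.sum_const, Finset.card_univ, Fintype.card_fin, smul_eq_mul, mul_one] at harith
  have hcardsum : ∑ k ∈ (Finset.univ : Finset (Fin p)), (C k).card =
      (Finset.univ.biUnion C).card :=
    (Finset.card_biUnion (fun k _ l _ hkl => hCdisj k l hkl)).symm
  rw [hsup, huniv, hsumrank, ← hcover]
  omega
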